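/- In the N-layer cascade network, let 1 ≤ n ≤ N and let u·ℳ be a monomial appearing in s_{n−1,L_{n−1}}^{(ℓ_0)} but in no lower-order derivative of s_{n−1,L_{n−1}}, where U is an intermediate species and ℳ involves only variables of species among {S_{k,j} : 1 ≤ k ≤ n−1} ∪ {E}. Assume ℳ does not contain two variables corresponding to species that react together, and that s_{n−1,L_{n−1}} does not divide ℳ. Then ℳ̂ := s_{n,L_n−1}·u·ℳ appears in s_{n,L_n}^{(ℓ_0+2)} and in no lower-order derivative of s_{n,L_n}; if C is the coefficient of u·ℳ in s_{n−1,L_{n−1}}^{(ℓ_0)}, the coefficient of ℳ̂ in s_{n,L_n}^{(ℓ_0+2)} equals c_{n,L_n} a_{n,L_n} C; and if C̃ is the coefficient of u·ℳ in s_{n−1,L_{n−1}}^{(ℓ_0+1)}, the coefficient of ℳ̂ in s_{n,L_n}^{(ℓ_0+3)} equals c_{n,L_n} a_{n,L_n} (C̃ − K_{n,L_n} C). -/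

import Mathlib

set_option linter.unusedSectionVars false
set_option maxHeartbeats 1000000


open MvPolynomial Finsupp

variable {σ : Type*}

/-- The total (Lie) derivative of a polynomial `φ` associated to the polynomial vector
field `f`: `φ̇ = Σ_x (∂φ/∂x)·f x`. -/
noncomputable def lieD [Fintype σ] (f : σ → MvPolynomial σ ℝ)
    (φ : MvPolynomial σ ℝ) : MvPolynomial σ ℝ :=
  ∑ x : σ, MvPolynomial.pderiv x φ * f x

/-- Iterated total (Lie) derivative. -/
noncomputable def lieDIter [Fintype σ] (f : σ → MvPolynomial σ ℝ) :
    ℕ → MvPolynomial σ ℝ → MvPolynomial σ ℝ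
  | 0, φ => φ
  | n + 1, φ => lieD f (lieDIter f n φ)

/-- Indicator of a species inside a complex, as a real number. -/
def ind [DecidableEq σ] (a x : σ) : ℝ := if a = x then 1 else 0

namespace CascadeAux

variable [Fintype σ] (f : σ → MvPolynomial σ ℝ)

theorem lieD_add (φ ψ : MvPolynomial σ ℝ) :
    lieD f (φ + ψ) = lieD f φ + lieD f ψ := by
  simp [lieD, add_mul, Finset.sum_add_distrib]

theorem lieD_zero : lieD f 0 = 0 := by simp [lieD]

theorem lieD_C_mul (r : ℝ) (φ : MvPolynomial σ ℝ) :
    lieD f (C r * φ) = C r * lieD f φ := by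
  simp [lieD, pderiv_C_mul, Finset.mul_sum, mul_assoc]

theorem lieD_mul (φ ψ : MvPolynomial σ ℝ) :
    lieD f (φ * ψ) = lieD f φ * ψ + φ * lieD f ψ := by
  simp only [lieD, pderiv_mul, add_mul, Finset.sum_add_distrib, Finset.sum_mul, Finset.mul_sum]
  congr 1
  · apply Finset.sum_congr rfl; intro x _; ring
  · apply Finset.sum_congr rfl; intro x _; ring

theorem lieD_X [DecidableEq σ] (x : σ) : lieD f (X x) = f x := by
  rw [lieD, Finset.sum_eq_single x]
  · simp
  · intro y _ hy; simp [pderiv_X, Pi.single_eq_of_ne' hy]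
  · intro h; exact absurd (Finset.mem_univ x) h

theorem lieDIter_zero (φ : MvPolynomial σ ℝ) : lieDIter f 0 φ = φ := rfl

theorem lieD_sum {α : Type*} (s : Finset α) (g : α → MvPolynomial σ ℝ) :
    lieD f (∑ a ∈ s, g a) = ∑ a ∈ s, lieD f (g a) := by
  classical
  induction s using Finset.induction with
  | empty => simp [lieD_zero]
  | insert _ _ h ih => rw [Finset.sum_insert h, lieD_add, ih, Finset.sum_insert h]

theorem lieDIter_succ (n : ℕ) (φ : MvPolynomial σ ℝ) :
    lieDIter f (n + 1) φ = lieD f (lieDIter f n φ) := rfl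

theorem lieDIter_succ' (n : ℕ) (φ : MvPolynomial σ ℝ) :
    lieDIter f (n + 1) φ = lieDIter f n (lieD f φ) := by
  induction n with
  | zero => rfl
  | succ n ih => rw [lieDIter_succ, ih, lieDIter_succ]

theorem lieDIter_add (n : ℕ) (φ ψ : MvPolynomial σ ℝ) :
    lieDIter f n (φ + ψ) = lieDIter f n φ + lieDIter f n ψ := by
  induction n with
  | zero => rfl
  | succ n ih => rw [lieDIter_succ, ih, lieD_add, lieDIter_succ, lieDIter_succ]

theorem lieDIter_zero_poly (n : ℕ) : lieDIter f n (0 : MvPolynomial σ ℝ) = 0 := by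
  induction n with
  | zero => rfl
  | succ n ih => rw [lieDIter_succ, ih, lieD_zero]

theorem lieDIter_C_mul (n : ℕ) (r : ℝ) (φ : MvPolynomial σ ℝ) :
    lieDIter f n (C r * φ) = C r * lieDIter f n φ := by
  induction n with
  | zero => rfl
  | succ n ih => rw [lieDIter_succ, ih, lieD_C_mul, lieDIter_succ]

theorem lieDIter_sum {α : Type*} (s : Finset α) (g : α → MvPolynomial σ ℝ) (n : ℕ) :
    lieDIter f n (∑ a ∈ s, g a) = ∑ a ∈ s, lieDIter f n (g a) := by
  classical
  induction s using Finset.induction with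
  | empty => simp [lieDIter_zero_poly]
  | insert _ _ h ih => rw [Finset.sum_insert h, lieDIter_add, ih, Finset.sum_insert h]

/-- Leibniz rule for iterated Lie derivatives. -/
theorem lieDIter_mul (t : ℕ) (φ ψ : MvPolynomial σ ℝ) :
    lieDIter f t (φ * ψ) = ∑ i ∈ Finset.range (t + 1),
      (C (t.choose i : ℝ)) * (lieDIter f i φ * lieDIter f (t - i) ψ) := by
  induction t with
  | zero => simp [lieDIter_zero]
  | succ t ih =>
      rw [lieDIter_succ, ih]
      have : ∀ i, lieD f ((C ((t.choose i : ℕ) : ℝ)) * (lieDIter f i φ * lieDIter f (t - i) ψ))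
          = C ((t.choose i : ℕ) : ℝ) * (lieDIter f (i+1) φ * lieDIter f (t - i) ψ)
            + C ((t.choose i : ℕ) : ℝ) * (lieDIter f i φ * lieDIter f (t - i + 1) ψ) := by
        intro i
        rw [lieD_C_mul, lieD_mul, mul_add, lieDIter_succ, lieDIter_succ]
      rw [lieD_sum]
      simp only [this]
      rw [Finset.sum_add_distrib]
      have e2 : ∑ i ∈ Finset.range (t + 1),
          C ((t.choose i : ℕ) : ℝ) * (lieDIter f i φ * lieDIter f (t - i + 1) ψ)
          = ∑ i ∈ Finset.range t,
              C ((t.choose (i+1) : ℕ) : ℝ) * (lieDIter f (i+1) φ * lieDIter f (t - i) ψ)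
            + C ((t.choose 0 : ℕ) : ℝ) * (lieDIter f 0 φ * lieDIter f (t + 1) ψ) := by
        rw [Finset.sum_range_succ']
        congr 1
        apply Finset.sum_congr rfl
        intro i hi
        have hit : i + 1 ≤ t := Nat.succ_le_of_lt (Finset.mem_range.mp hi)
        have : t - (i+1) + 1 = t - i := by omega
        rw [this]
      have e1 : ∑ i ∈ Finset.range (t + 1),
          C ((t.choose i : ℕ) : ℝ) * (lieDIter f (i+1) φ * lieDIter f (t - i) ψ)
          = ∑ i ∈ Finset.range t,
              C ((t.choose i : ℕ) : ℝ) * (lieDIter f (i+1) φ * lieDIter f (t - i) ψ)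
            + C ((t.choose t : ℕ) : ℝ) * (lieDIter f (t+1) φ * lieDIter f 0 ψ) := by
        rw [Finset.sum_range_succ, Nat.sub_self]
      rw [e1, e2]
      rw [Finset.sum_range_succ' (n := t + 1)]
      have e3 : ∀ i ∈ Finset.range (t+1),
          C (((t+1).choose (i+1) : ℕ) : ℝ) * (lieDIter f (i+1) φ * lieDIter f (t + 1 - (i+1)) ψ)
          = C ((t.choose i : ℕ) : ℝ) * (lieDIter f (i+1) φ * lieDIter f (t - i) ψ)
            + C ((t.choose (i+1) : ℕ) : ℝ) * (lieDIter f (i+1) φ * lieDIter f (t - i) ψ) := by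
        intro i hi
        have : t + 1 - (i+1) = t - i := by omega
        rw [this, Nat.choose_succ_succ, Nat.cast_add, map_add, add_mul]
      rw [Finset.sum_congr rfl e3, Finset.sum_add_distrib,
        Finset.sum_range_succ
          (f := fun i => C ((t.choose (i+1) : ℕ) : ℝ) * (lieDIter f (i+1) φ * lieDIter f (t - i) ψ))]
      simp only [Nat.choose_succ_self, Nat.cast_zero, map_zero, zero_mul, add_zero,
        Nat.choose_zero_right, Nat.cast_one, Nat.sub_zero, Nat.sub_self, Nat.choose_self]
      rw [Finset.sum_range_succ
          (f := fun i => C ((t.choose i : ℕ) : ℝ) * (lieDIter f (i+1) φ * lieDIter f (t - i) ψ))]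
      simp only [Nat.sub_self, Nat.choose_self, Nat.cast_one]
      ring


/-- One structural step: monomial `y'` arises from `y` by differentiating variable `x`
and multiplying by a monomial `w` of `f x`. -/
def EdgeStep [DecidableEq σ] (f : σ → MvPolynomial σ ℝ) (y y' : σ →₀ ℕ) : Prop :=
  ∃ x w, y x ≠ 0 ∧ MvPolynomial.coeff w (f x) ≠ 0 ∧ y' = y - Finsupp.single x 1 + w

theorem coeff_pderiv_ne_zero [DecidableEq σ] {x : σ} {φ : MvPolynomial σ ℝ} {d : σ →₀ ℕ}
    (h : MvPolynomial.coeff d (MvPolynomial.pderiv x φ) ≠ 0) :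
    ∃ y : σ →₀ ℕ, MvPolynomial.coeff y φ ≠ 0 ∧ y x ≠ 0 ∧ d = y - Finsupp.single x 1 := by
  classical
  rw [φ.as_sum, map_sum] at h
  simp only [MvPolynomial.coeff_sum] at h
  obtain ⟨y, hy, hne⟩ := Finset.exists_ne_zero_of_sum_ne_zero h
  rw [pderiv_monomial, coeff_monomial] at hne
  by_cases hd : y - Finsupp.single x 1 = d
  · rw [if_pos hd] at hne
    refine ⟨y, MvPolynomial.mem_support_iff.mp hy, ?_, hd.symm⟩
    intro h0
    rw [h0] at hne; simp at hne
  · rw [if_neg hd] at hne; exact absurd rfl hne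

theorem coeff_mul_ne_zero {φ ψ : MvPolynomial σ ℝ} {d : σ →₀ ℕ}
    (h : MvPolynomial.coeff d (φ * ψ) ≠ 0) :
    ∃ d1 d2, d1 + d2 = d ∧ MvPolynomial.coeff d1 φ ≠ 0 ∧ MvPolynomial.coeff d2 ψ ≠ 0 := by
  classical
  rw [MvPolynomial.coeff_mul] at h
  obtain ⟨p, hp, hne⟩ := Finset.exists_ne_zero_of_sum_ne_zero h
  exact ⟨p.1, p.2, Finset.HasAntidiagonal.mem_antidiagonal.mp hp, left_ne_zero_of_mul hne,
    right_ne_zero_of_mul hne⟩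

theorem coeff_lieD_ne_zero [DecidableEq σ] {f : σ → MvPolynomial σ ℝ} {φ : MvPolynomial σ ℝ}
    {d' : σ →₀ ℕ} (h : MvPolynomial.coeff d' (lieD f φ) ≠ 0) :
    ∃ d, MvPolynomial.coeff d φ ≠ 0 ∧ EdgeStep f d d' := by
  rw [lieD] at h
  simp only [MvPolynomial.coeff_sum] at h
  obtain ⟨x, -, hne⟩ := Finset.exists_ne_zero_of_sum_ne_zero h
  obtain ⟨d1, d2, hsum, h1, h2⟩ := coeff_mul_ne_zero hne
  obtain ⟨y, hyφ, hyx, hd1⟩ := coeff_pderiv_ne_zero h1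
  refine ⟨y, hyφ, x, d2, hyx, h2, ?_⟩
  rw [← hsum, hd1]

/-- Closure principle: a predicate closed under structural steps holds for all
monomials of all iterated Lie derivatives. -/
theorem closure [DecidableEq σ] {f : σ → MvPolynomial σ ℝ} {A : (σ →₀ ℕ) → Prop}
    (hA : ∀ y y', A y → EdgeStep f y y' → A y') {φ : MvPolynomial σ ℝ}
    (hφ : ∀ d, MvPolynomial.coeff d φ ≠ 0 → A d) :
    ∀ t d, MvPolynomial.coeff d (lieDIter f t φ) ≠ 0 → A d := by
  intro t
  induction t with
  | zero => exact hφ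
  | succ t ih =>
      intro d hd
      rw [lieDIter_succ] at hd
      obtain ⟨y, hy, hstep⟩ := coeff_lieD_ne_zero hd
      exact hA y d (ih y hy) hstep

theorem sub_single_add_eq {y : σ →₀ ℕ} {x : σ} (hx : y x ≠ 0) :
    y - Finsupp.single x 1 + Finsupp.single x 1 = y :=
  tsub_add_cancel_of_le (Finsupp.single_le_iff.mpr (Nat.one_le_iff_ne_zero.mpr hx))

/-- Closed form for the iterated derivative of a variable satisfying a linear
recursion `ġ = α A + κ g`. -/
theorem iter_linear (g A : MvPolynomial σ ℝ) (α κ : ℝ)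
    (hg : lieD f g = C α * A + C κ * g) (t : ℕ) :
    lieDIter f t g = C α * ∑ p ∈ Finset.range t, C (κ ^ (t - 1 - p)) * lieDIter f p A
      + C (κ ^ t) * g := by
  induction t with
  | zero => simp [lieDIter_zero]
  | succ t ih =>
      rw [lieDIter_succ, ih, lieD_add, lieD_C_mul, lieD_C_mul, lieD_sum, hg]
      have e1 : ∀ p, lieD f (C (κ ^ (t - 1 - p)) * lieDIter f p A)
          = C (κ ^ (t - 1 - p)) * lieDIter f (p + 1) A := by
        intro p; rw [lieD_C_mul, lieDIter_succ]
      simp only [e1]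
      rw [Finset.sum_range_succ' (f := fun p => C (κ ^ (t + 1 - 1 - p)) * lieDIter f p A)]
      have e2 : ∀ p, t + 1 - 1 - (p + 1) = t - 1 - p := by intro p; omega
      have e3 : t + 1 - 1 - 0 = t := by omega
      simp only [e2, e3, lieDIter_zero]
      rw [mul_add, mul_add]
      have e4 : C (κ ^ t) * (C α * A) = C α * (C (κ ^ t) * A) := by ring
      have e5 : C (κ ^ t) * (C κ * g) = (C (κ ^ (t+1)) : MvPolynomial σ ℝ) * g := by
        rw [← mul_assoc, ← map_mul, ← pow_succ]
      rw [e4, e5]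
      ring

end CascadeAux


/-- The `N`-layer cascade network. Setting `S_{0,L_0} := E`, layer `m` (`1 ≤ m ≤ N`)
consists of the two connected components
`S_{m-1,L_{m-1}} + S_{m,0} ⇄ U_{m,1} → ⋯ ⇄ U_{m,L_m} → S_{m-1,L_{m-1}} + S_{m,L_m}`
(rate constants `a_{m,j}, b_{m,j}, c_{m,j}`, encoded as indices `0,1,2`) and
`F_m + S_{m,L_m} ⇄ V_{m,L_m} → ⋯ ⇄ V_{m,1} → F_m + S_{m,0}`
(rate constants `ã_{m,j}, b̃_{m,j}, c̃_{m,j}`, encoded as indices `3,4,5`).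
All the species `E`, `F m`, `S m j`, `U m j`, `V m j` (in the relevant index ranges)
are pairwise distinct. -/
structure Cascade (σ : Type*) where
  N : ℕ
  Npos : 1 ≤ N
  L : ℕ → ℕ
  Lpos : ∀ m, 1 ≤ m → m ≤ N → 1 ≤ L m
  E : σ
  F : ℕ → σ
  S : ℕ → ℕ → σ
  U : ℕ → ℕ → σ
  V : ℕ → ℕ → σ
  hEF : ∀ m, 1 ≤ m → m ≤ N → E ≠ F m
  hES : ∀ m j, 1 ≤ m → m ≤ N → j ≤ L m → E ≠ S m j
  hEU : ∀ m j, 1 ≤ m → m ≤ N → 1 ≤ j → j ≤ L m → E ≠ U m j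
  hEV : ∀ m j, 1 ≤ m → m ≤ N → 1 ≤ j → j ≤ L m → E ≠ V m j
  hFinj : ∀ m m', 1 ≤ m → m ≤ N → 1 ≤ m' → m' ≤ N → F m = F m' → m = m'
  hFS : ∀ m m' j', 1 ≤ m → m ≤ N → 1 ≤ m' → m' ≤ N → j' ≤ L m' → F m ≠ S m' j'
  hFU : ∀ m m' j', 1 ≤ m → m ≤ N → 1 ≤ m' → m' ≤ N → 1 ≤ j' → j' ≤ L m' → F m ≠ U m' j'
  hFV : ∀ m m' j', 1 ≤ m → m ≤ N → 1 ≤ m' → m' ≤ N → 1 ≤ j' → j' ≤ L m' → F m ≠ V m' j'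
  hSinj : ∀ m j m' j', 1 ≤ m → m ≤ N → j ≤ L m → 1 ≤ m' → m' ≤ N → j' ≤ L m' →
    S m j = S m' j' → m = m' ∧ j = j'
  hSU : ∀ m j m' j', 1 ≤ m → m ≤ N → j ≤ L m → 1 ≤ m' → m' ≤ N → 1 ≤ j' → j' ≤ L m' →
    S m j ≠ U m' j'
  hSV : ∀ m j m' j', 1 ≤ m → m ≤ N → j ≤ L m → 1 ≤ m' → m' ≤ N → 1 ≤ j' → j' ≤ L m' →
    S m j ≠ V m' j'
  hUinj : ∀ m j m' j', 1 ≤ m → m ≤ N → 1 ≤ j → j ≤ L m → 1 ≤ m' → m' ≤ N → 1 ≤ j' →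
    j' ≤ L m' → U m j = U m' j' → m = m' ∧ j = j'
  hUV : ∀ m j m' j', 1 ≤ m → m ≤ N → 1 ≤ j → j ≤ L m → 1 ≤ m' → m' ≤ N → 1 ≤ j' →
    j' ≤ L m' → U m j ≠ V m' j'
  hVinj : ∀ m j m' j', 1 ≤ m → m ≤ N → 1 ≤ j → j ≤ L m → 1 ≤ m' → m' ≤ N → 1 ≤ j' →
    j' ≤ L m' → V m j = V m' j' → m = m' ∧ j = j'

namespace Cascade

variable [Fintype σ] [DecidableEq σ]

/-- The species `S_{m, L_m}`, with the convention `S_{0, L_0} := E`; `act (m-1)` is the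
enzyme acting on the first component of layer `m`. -/
def act (c : Cascade σ) (m : ℕ) : σ := if m = 0 then c.E else c.S m (c.L m)

/-- The mass-action right-hand side of the cascade system; `k m j t` is the rate constant
of layer `m`, block `j`, with `t = 0,…,5` for `a_{m,j}, b_{m,j}, c_{m,j}, ã_{m,j},
b̃_{m,j}, c̃_{m,j}`. -/
noncomputable def rhs (c : Cascade σ) (k : ℕ → ℕ → Fin 6 → ℝ) (x : σ) :
    MvPolynomial σ ℝ :=
  ∑ m ∈ Finset.Icc 1 c.N, ∑ j ∈ Finset.Icc 1 (c.L m),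
    (C (k m j 0 * (ind (c.U m j) x - ind (c.act (m - 1)) x - ind (c.S m (j - 1)) x)) *
        (X (c.act (m - 1)) * X (c.S m (j - 1)))
      + C (k m j 1 * (ind (c.act (m - 1)) x + ind (c.S m (j - 1)) x - ind (c.U m j) x)) *
        X (c.U m j)
      + C (k m j 2 * (ind (c.act (m - 1)) x + ind (c.S m j) x - ind (c.U m j) x)) *
        X (c.U m j)
      + C (k m j 3 * (ind (c.V m j) x - ind (c.F m) x - ind (c.S m j) x)) *
        (X (c.F m) * X (c.S m j))
      + C (k m j 4 * (ind (c.F m) x + ind (c.S m j) x - ind (c.V m j) x)) *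
        X (c.V m j)
      + C (k m j 5 * (ind (c.F m) x + ind (c.S m (j - 1)) x - ind (c.V m j) x)) *
        X (c.V m j))

/-- `x^{(ℓ)}(x, k)`: the `ℓ`-th iterated total derivative of the variable `x` along the
cascade mass-action system. -/
noncomputable def deriv (c : Cascade σ) (k : ℕ → ℕ → Fin 6 → ℝ) (ℓ : ℕ) (x : σ) :
    MvPolynomial σ ℝ :=
  lieDIter (c.rhs k) ℓ (X x)

/-- The non-intermediate `x₁` reacts with the non-intermediate `x₂` in the cascade. -/
def reactsWith (c : Cascade σ) (x₁ x₂ : σ) : Prop :=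
  ∃ m j, 1 ≤ m ∧ m ≤ c.N ∧ 1 ≤ j ∧ j ≤ c.L m ∧
    ((x₁ = c.act (m - 1) ∧ x₂ = c.S m (j - 1)) ∨
     (x₂ = c.act (m - 1) ∧ x₁ = c.S m (j - 1)) ∨
     (x₁ = c.F m ∧ x₂ = c.S m j) ∨ (x₂ = c.F m ∧ x₁ = c.S m j))

/-- The exponent vector `𝒫 = ∏_{i=m+1}^n s_{i, L_i - 1}`. -/
noncomputable def PP (c : Cascade σ) (n m : ℕ) : σ →₀ ℕ :=
  ∑ i ∈ Finset.Icc (m + 1) n, Finsupp.single (c.S i (c.L i - 1)) 1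

/-- The constant `𝒞 = ∏_{i=m+1}^n c_{i, L_i} a_{i, L_i}`. -/
def CC (c : Cascade σ) (k : ℕ → ℕ → Fin 6 → ℝ) (n m : ℕ) : ℝ :=
  ∏ i ∈ Finset.Icc (m + 1) n, (k i (c.L i) 2 * k i (c.L i) 0)

/-- The constant `𝒦 = Σ_{i=m+1}^n K_{i, L_i}`. -/
def KK (c : Cascade σ) (k : ℕ → ℕ → Fin 6 → ℝ) (n m : ℕ) : ℝ :=
  ∑ i ∈ Finset.Icc (m + 1) n, (k i (c.L i) 1 + k i (c.L i) 2)


section Aux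

variable {σ : Type*} [Fintype σ] [DecidableEq σ] (c : Cascade σ) (k : ℕ → ℕ → Fin 6 → ℝ)

open CascadeAux

lemma ind_of_ne {a x : σ} (h : a ≠ x) : ind a x = 0 := by simp [ind, h]

lemma ind_self (a : σ) : ind a a = 1 := by simp [ind]

lemma ne_of_ind_ne {a x : σ} (h : ind a x ≠ 0) : x = a := by
  by_contra hc; exact h (ind_of_ne fun he => hc he.symm)

lemma coeff_X_ne {a : σ} {w : σ →₀ ℕ} (h : MvPolynomial.coeff w (MvPolynomial.X (R := ℝ) a) ≠ 0) :
    w = Finsupp.single a 1 := by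
  rw [MvPolynomial.coeff_X'] at h
  by_contra hc
  rw [if_neg (fun he => hc he.symm)] at h
  exact h rfl

lemma term_CX {r : ℝ} {a : σ} {w : σ →₀ ℕ}
    (h : MvPolynomial.coeff w (MvPolynomial.C r * MvPolynomial.X a) ≠ 0) :
    r ≠ 0 ∧ w = Finsupp.single a 1 := by
  rw [MvPolynomial.coeff_C_mul] at h
  exact ⟨left_ne_zero_of_mul h, coeff_X_ne (right_ne_zero_of_mul h)⟩

lemma term_CX2 {r : ℝ} {a b : σ} {w : σ →₀ ℕ}
    (h : MvPolynomial.coeff w (MvPolynomial.C r * (MvPolynomial.X a * MvPolynomial.X b)) ≠ 0) :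
    r ≠ 0 ∧ w = Finsupp.single a 1 + Finsupp.single b 1 := by
  rw [MvPolynomial.coeff_C_mul] at h
  refine ⟨left_ne_zero_of_mul h, ?_⟩
  obtain ⟨d1, d2, hd, h1, h2⟩ := coeff_mul_ne_zero (right_ne_zero_of_mul h)
  rw [← hd, coeff_X_ne h1, coeff_X_ne h2]

/-- Shapes of monomials of the right-hand side of the cascade system. -/
theorem coeff_rhs_cases {x : σ} {w : σ →₀ ℕ} (h : MvPolynomial.coeff w (c.rhs k x) ≠ 0) :
    ∃ m j, 1 ≤ m ∧ m ≤ c.N ∧ 1 ≤ j ∧ j ≤ c.L m ∧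
      ((w = Finsupp.single (c.act (m-1)) 1 + Finsupp.single (c.S m (j-1)) 1 ∧
          (x = c.U m j ∨ x = c.act (m-1) ∨ x = c.S m (j-1)))
       ∨ (w = Finsupp.single (c.U m j) 1 ∧
          (x = c.act (m-1) ∨ x = c.S m (j-1) ∨ x = c.S m j ∨ x = c.U m j))
       ∨ (w = Finsupp.single (c.F m) 1 + Finsupp.single (c.S m j) 1 ∧
          (x = c.V m j ∨ x = c.F m ∨ x = c.S m j))
       ∨ (w = Finsupp.single (c.V m j) 1 ∧
          (x = c.F m ∨ x = c.S m j ∨ x = c.S m (j-1) ∨ x = c.V m j))) := by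
  rw [Cascade.rhs] at h
  simp only [MvPolynomial.coeff_sum] at h
  obtain ⟨m, hm, h⟩ := Finset.exists_ne_zero_of_sum_ne_zero h
  obtain ⟨j, hj, h⟩ := Finset.exists_ne_zero_of_sum_ne_zero h
  rw [Finset.mem_Icc] at hm hj
  refine ⟨m, j, hm.1, hm.2, hj.1, hj.2, ?_⟩
  simp only [MvPolynomial.coeff_add] at h
  have h' : (MvPolynomial.coeff w (MvPolynomial.C (k m j 0 *
        (ind (c.U m j) x - ind (c.act (m - 1)) x - ind (c.S m (j - 1)) x)) *
        (MvPolynomial.X (c.act (m - 1)) * MvPolynomial.X (c.S m (j - 1)))) ≠ 0)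
      ∨ (MvPolynomial.coeff w (MvPolynomial.C (k m j 1 *
        (ind (c.act (m - 1)) x + ind (c.S m (j - 1)) x - ind (c.U m j) x)) *
        MvPolynomial.X (c.U m j)) ≠ 0)
      ∨ (MvPolynomial.coeff w (MvPolynomial.C (k m j 2 *
        (ind (c.act (m - 1)) x + ind (c.S m j) x - ind (c.U m j) x)) *
        MvPolynomial.X (c.U m j)) ≠ 0)
      ∨ (MvPolynomial.coeff w (MvPolynomial.C (k m j 3 *
        (ind (c.V m j) x - ind (c.F m) x - ind (c.S m j) x)) *
        (MvPolynomial.X (c.F m) * MvPolynomial.X (c.S m j))) ≠ 0)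
      ∨ (MvPolynomial.coeff w (MvPolynomial.C (k m j 4 *
        (ind (c.F m) x + ind (c.S m j) x - ind (c.V m j) x)) *
        MvPolynomial.X (c.V m j)) ≠ 0)
      ∨ (MvPolynomial.coeff w (MvPolynomial.C (k m j 5 *
        (ind (c.F m) x + ind (c.S m (j - 1)) x - ind (c.V m j) x)) *
        MvPolynomial.X (c.V m j)) ≠ 0) := by
    by_contra hc
    push_neg at hc
    obtain ⟨h1, h2, h3, h4, h5, h6⟩ := hc
    rw [h1, h2, h3, h4, h5, h6] at h
    simp at h
  have indcases : ∀ {A B C : σ} {r : ℝ},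
      r * (ind A x + ind B x - ind C x) ≠ 0 → x = A ∨ x = B ∨ x = C := by
    intro A B C r hr
    have hr' := right_ne_zero_of_mul hr
    by_cases hA : x = A
    · exact Or.inl hA
    by_cases hB : x = B
    · exact Or.inr (Or.inl hB)
    by_cases hC : x = C
    · exact Or.inr (Or.inr hC)
    rw [ind_of_ne fun he => hA he.symm, ind_of_ne fun he => hB he.symm,
      ind_of_ne fun he => hC he.symm] at hr'
    simp at hr'
  have indcases' : ∀ {A B C : σ} {r : ℝ},
      r * (ind A x - ind B x - ind C x) ≠ 0 → x = A ∨ x = B ∨ x = C := by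
    intro A B C r hr
    have hr' := right_ne_zero_of_mul hr
    by_cases hA : x = A
    · exact Or.inl hA
    by_cases hB : x = B
    · exact Or.inr (Or.inl hB)
    by_cases hC : x = C
    · exact Or.inr (Or.inr hC)
    rw [ind_of_ne fun he => hA he.symm, ind_of_ne fun he => hB he.symm,
      ind_of_ne fun he => hC he.symm] at hr'
    simp at hr'
  rcases h' with h' | h' | h' | h' | h' | h'
  · obtain ⟨hr, hw⟩ := term_CX2 h'
    exact Or.inl ⟨hw, indcases' hr⟩
  · obtain ⟨hr, hw⟩ := term_CX h'
    rcases indcases hr with h1 | h1 | h1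
    · exact Or.inr (Or.inl ⟨hw, Or.inl h1⟩)
    · exact Or.inr (Or.inl ⟨hw, Or.inr (Or.inl h1)⟩)
    · exact Or.inr (Or.inl ⟨hw, Or.inr (Or.inr (Or.inr h1))⟩)
  · obtain ⟨hr, hw⟩ := term_CX h'
    rcases indcases hr with h1 | h1 | h1
    · exact Or.inr (Or.inl ⟨hw, Or.inl h1⟩)
    · exact Or.inr (Or.inl ⟨hw, Or.inr (Or.inr (Or.inl h1))⟩)
    · exact Or.inr (Or.inl ⟨hw, Or.inr (Or.inr (Or.inr h1))⟩)
  · obtain ⟨hr, hw⟩ := term_CX2 h'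
    exact Or.inr (Or.inr (Or.inl ⟨hw, indcases' hr⟩))
  · obtain ⟨hr, hw⟩ := term_CX h'
    rcases indcases hr with h1 | h1 | h1
    · exact Or.inr (Or.inr (Or.inr ⟨hw, Or.inl h1⟩))
    · exact Or.inr (Or.inr (Or.inr ⟨hw, Or.inr (Or.inl h1)⟩))
    · exact Or.inr (Or.inr (Or.inr ⟨hw, Or.inr (Or.inr (Or.inr h1))⟩))
  · obtain ⟨hr, hw⟩ := term_CX h'
    rcases indcases hr with h1 | h1 | h1
    · exact Or.inr (Or.inr (Or.inr ⟨hw, Or.inl h1⟩))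
    · exact Or.inr (Or.inr (Or.inr ⟨hw, Or.inr (Or.inr (Or.inl h1))⟩))
    · exact Or.inr (Or.inr (Or.inr ⟨hw, Or.inr (Or.inr (Or.inr h1))⟩))

def IsInter (x : σ) : Prop :=
  ∃ m j, 1 ≤ m ∧ m ≤ c.N ∧ 1 ≤ j ∧ j ≤ c.L m ∧ (x = c.U m j ∨ x = c.V m j)

def IsSub (x : σ) : Prop :=
  x = c.E ∨ ∃ m j, 1 ≤ m ∧ m ≤ c.N ∧ j ≤ c.L m ∧ x = c.S m j

def HasInter (y : σ →₀ ℕ) : Prop := ∃ x, c.IsInter x ∧ y x ≠ 0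

def Pairy (y : σ →₀ ℕ) : Prop := ∃ x1 x2, c.reactsWith x1 x2 ∧ y x1 ≠ 0 ∧ y x2 ≠ 0

variable {c}

lemma isSub_act {m : ℕ} (h1 : 1 ≤ m) (h2 : m ≤ c.N) : c.IsSub (c.act (m - 1)) := by
  rcases Nat.eq_or_lt_of_le h1 with h | h
  · left; rw [Cascade.act, if_pos (by omega)]
  · right
    refine ⟨m - 1, c.L (m-1), by omega, by omega, le_refl _, ?_⟩
    rw [Cascade.act, if_neg (by omega)]

lemma isSub_S {m j : ℕ} (h1 : 1 ≤ m) (h2 : m ≤ c.N) (h3 : j ≤ c.L m) : c.IsSub (c.S m j) :=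
  Or.inr ⟨m, j, h1, h2, h3, rfl⟩

lemma sub_ne_U (hx : c.IsSub x) {m' j' : ℕ} (h1 : 1 ≤ m') (h2 : m' ≤ c.N) (h3 : 1 ≤ j')
    (h4 : j' ≤ c.L m') : x ≠ c.U m' j' := by
  rcases hx with h | ⟨m, j, hm1, hm2, hj, h⟩
  · rw [h]; exact c.hEU m' j' h1 h2 h3 h4
  · rw [h]; exact c.hSU m j m' j' hm1 hm2 hj h1 h2 h3 h4

lemma sub_ne_V (hx : c.IsSub x) {m' j' : ℕ} (h1 : 1 ≤ m') (h2 : m' ≤ c.N) (h3 : 1 ≤ j')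
    (h4 : j' ≤ c.L m') : x ≠ c.V m' j' := by
  rcases hx with h | ⟨m, j, hm1, hm2, hj, h⟩
  · rw [h]; exact c.hEV m' j' h1 h2 h3 h4
  · rw [h]; exact c.hSV m j m' j' hm1 hm2 hj h1 h2 h3 h4

lemma sub_ne_F (hx : c.IsSub x) {m' : ℕ} (h1 : 1 ≤ m') (h2 : m' ≤ c.N) : x ≠ c.F m' := by
  rcases hx with h | ⟨m, j, hm1, hm2, hj, h⟩
  · rw [h]; exact c.hEF m' h1 h2
  · rw [h]; exact fun he => c.hFS m' m j h1 h2 hm1 hm2 hj he.symm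

lemma sub_ne_inter (hx : c.IsSub x) (hx' : c.IsInter x') : x ≠ x' := by
  obtain ⟨m, j, h1, h2, h3, h4, h | h⟩ := hx'
  · rw [h]; exact sub_ne_U hx h1 h2 h3 h4
  · rw [h]; exact sub_ne_V hx h1 h2 h3 h4

variable (c)

theorem edgestep_CC {y y' : σ →₀ ℕ} (h : CascadeAux.EdgeStep (c.rhs k) y y') :
    c.HasInter y' ∨ c.Pairy y' := by
  obtain ⟨x, w, hx, hw, hy'⟩ := h
  obtain ⟨m, j, hm1, hm2, hj1, hj2, hcase⟩ := coeff_rhs_cases c k hw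
  have hmem : ∀ v, w v ≠ 0 → y' v ≠ 0 := by
    intro v hv
    rw [hy', Finsupp.add_apply]
    omega
  rcases hcase with ⟨hw1, -⟩ | ⟨hw1, -⟩ | ⟨hw1, -⟩ | ⟨hw1, -⟩
  · right
    refine ⟨c.act (m-1), c.S m (j-1), ⟨m, j, hm1, hm2, hj1, hj2, Or.inl ⟨rfl, rfl⟩⟩, ?_, ?_⟩
    · apply hmem; rw [hw1]; simp [Finsupp.single_apply]
    · apply hmem; rw [hw1]; simp [Finsupp.single_apply]
  · left
    exact ⟨c.U m j, ⟨m, j, hm1, hm2, hj1, hj2, Or.inl rfl⟩, hmem _ (by rw [hw1]; simp)⟩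
  · right
    refine ⟨c.F m, c.S m j,
      ⟨m, j, hm1, hm2, hj1, hj2, Or.inr (Or.inr (Or.inl ⟨rfl, rfl⟩))⟩, ?_, ?_⟩
    · apply hmem; rw [hw1]; simp [Finsupp.single_apply]
    · apply hmem; rw [hw1]; simp [Finsupp.single_apply]
  · left
    exact ⟨c.V m j, ⟨m, j, hm1, hm2, hj1, hj2, Or.inr rfl⟩, hmem _ (by rw [hw1]; simp)⟩

/-- Every monomial of an iterated derivative of positive order contains a full
reactant complex: an intermediate or a pair of reacting species. -/
theorem lineage_CC (φ : MvPolynomial σ ℝ) (t : ℕ) (d : σ →₀ ℕ)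
    (h : MvPolynomial.coeff d (lieDIter (c.rhs k) (t + 1) φ) ≠ 0) :
    c.HasInter d ∨ c.Pairy d := by
  rw [CascadeAux.lieDIter_succ'] at h
  refine CascadeAux.closure (f := c.rhs k) (A := fun d => c.HasInter d ∨ c.Pairy d)
    ?_ ?_ t d h
  · intro y y' _ hstep; exact edgestep_CC c k hstep
  · intro d hd
    obtain ⟨y, hy, hstep⟩ := CascadeAux.coeff_lieD_ne_zero hd
    exact edgestep_CC c k hstep

/-- The generic summand of `rhs`. -/
noncomputable def rterm (x : σ) (m j : ℕ) : MvPolynomial σ ℝ :=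
  (MvPolynomial.C (k m j 0 * (ind (c.U m j) x - ind (c.act (m - 1)) x - ind (c.S m (j - 1)) x)) *
      (MvPolynomial.X (c.act (m - 1)) * MvPolynomial.X (c.S m (j - 1)))
    + MvPolynomial.C (k m j 1 * (ind (c.act (m - 1)) x + ind (c.S m (j - 1)) x - ind (c.U m j) x)) *
      MvPolynomial.X (c.U m j)
    + MvPolynomial.C (k m j 2 * (ind (c.act (m - 1)) x + ind (c.S m j) x - ind (c.U m j) x)) *
      MvPolynomial.X (c.U m j)
    + MvPolynomial.C (k m j 3 * (ind (c.V m j) x - ind (c.F m) x - ind (c.S m j) x)) *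
      (MvPolynomial.X (c.F m) * MvPolynomial.X (c.S m j))
    + MvPolynomial.C (k m j 4 * (ind (c.F m) x + ind (c.S m j) x - ind (c.V m j) x)) *
      MvPolynomial.X (c.V m j)
    + MvPolynomial.C (k m j 5 * (ind (c.F m) x + ind (c.S m (j - 1)) x - ind (c.V m j) x)) *
      MvPolynomial.X (c.V m j))

lemma rhs_eq_sum_rterm (x : σ) :
    c.rhs k x = ∑ m ∈ Finset.Icc 1 c.N, ∑ j ∈ Finset.Icc 1 (c.L m), c.rterm k x m j := rfl

lemma rterm_zero {x : σ} {m j : ℕ}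
    (i1 : ind (c.U m j) x = 0) (i2 : ind (c.act (m - 1)) x = 0)
    (i3 : ind (c.S m (j - 1)) x = 0) (i4 : ind (c.S m j) x = 0)
    (i5 : ind (c.F m) x = 0) (i6 : ind (c.V m j) x = 0) :
    c.rterm k x m j = 0 := by
  rw [rterm, i1, i2, i3, i4, i5, i6]
  simp

lemma act_eq {n : ℕ} (hn : 1 ≤ n) : c.act n = c.S n (c.L n) := by
  rw [Cascade.act, if_neg (by omega)]

lemma act_ne_S {m m' j' : ℕ} (h1 : 1 ≤ m) (h2 : m ≤ c.N) (h1' : 1 ≤ m') (h2' : m' ≤ c.N)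
    (h3' : j' ≤ c.L m') (hne : m - 1 ≠ m') : c.act (m - 1) ≠ c.S m' j' := by
  rcases isSub_act (c := c) h1 h2 with h | ⟨m'', j'', hm1, hm2, hj, h⟩
  · rw [h]; exact c.hES m' j' h1' h2' h3'
  · rw [h]
    intro he
    obtain ⟨he1, he2⟩ := c.hSinj m'' j'' m' j' hm1 hm2 hj h1' h2' h3' he
    apply hne
    have : c.act (m-1) = c.S m'' j'' := h
    rw [Cascade.act] at this
    by_cases hm0 : m - 1 = 0
    · exfalso
      rw [if_pos hm0] at this
      exact c.hES m'' j'' hm1 hm2 hj this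
    · rw [if_neg hm0] at this
      obtain ⟨q1, -⟩ := c.hSinj (m-1) (c.L (m-1)) m'' j'' (by omega) (by omega) (le_refl _)
        hm1 hm2 hj this
      omega

/-- `rhs` at an intermediate `U m j`. -/
theorem rhs_U {m j : ℕ} (hm1 : 1 ≤ m) (hm2 : m ≤ c.N) (hj1 : 1 ≤ j) (hj2 : j ≤ c.L m) :
    c.rhs k (c.U m j) =
      MvPolynomial.C (k m j 0) *
          (MvPolynomial.X (c.act (m - 1)) * MvPolynomial.X (c.S m (j - 1)))
        + MvPolynomial.C (-(k m j 1 + k m j 2)) * MvPolynomial.X (c.U m j) := by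
  rw [rhs_eq_sum_rterm]
  rw [Finset.sum_eq_single_of_mem m (Finset.mem_Icc.mpr ⟨hm1, hm2⟩)]
  · rw [Finset.sum_eq_single_of_mem j (Finset.mem_Icc.mpr ⟨hj1, hj2⟩)]
    · have i1 : ind (c.U m j) (c.U m j) = 1 := ind_self _
      have i2 : ind (c.act (m - 1)) (c.U m j) = 0 :=
        ind_of_ne (sub_ne_U (isSub_act hm1 hm2) hm1 hm2 hj1 hj2)
      have i3 : ind (c.S m (j - 1)) (c.U m j) = 0 :=
        ind_of_ne (sub_ne_U (isSub_S hm1 hm2 (by omega)) hm1 hm2 hj1 hj2)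
      have i4 : ind (c.S m j) (c.U m j) = 0 :=
        ind_of_ne (sub_ne_U (isSub_S hm1 hm2 hj2) hm1 hm2 hj1 hj2)
      have i5 : ind (c.F m) (c.U m j) = 0 :=
        ind_of_ne (c.hFU m m j hm1 hm2 hm1 hm2 hj1 hj2)
      have i6 : ind (c.V m j) (c.U m j) = 0 :=
        ind_of_ne (Ne.symm (c.hUV m j m j hm1 hm2 hj1 hj2 hm1 hm2 hj1 hj2))
      rw [rterm, i1, i2, i3, i4, i5, i6]
      have e1 : k m j 0 * (1 - 0 - 0) = k m j 0 := by ring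
      have e2 : k m j 1 * (0 + 0 - 1) = -(k m j 1) := by ring
      have e3 : k m j 2 * (0 + 0 - 1) = -(k m j 2) := by ring
      have e4 : k m j 3 * (0 - 0 - 0) = 0 := by ring
      have e5 : k m j 4 * (0 + 0 - 0) = 0 := by ring
      have e6 : k m j 5 * (0 + 0 - 0) = 0 := by ring
      rw [e1, e2, e3, e4, e5, e6]
      simp only [map_zero, zero_mul, add_zero, map_neg, map_add]
      ring
    · intro j' hj' hne
      rw [Finset.mem_Icc] at hj'
      refine rterm_zero c k ?_ ?_ ?_ ?_ ?_ ?_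
      · exact ind_of_ne fun he => hne (c.hUinj m j' m j hm1 hm2 hj'.1 hj'.2 hm1 hm2 hj1 hj2 he).2
      · exact ind_of_ne (sub_ne_U (isSub_act hm1 hm2) hm1 hm2 hj1 hj2)
      · exact ind_of_ne (sub_ne_U (isSub_S hm1 hm2 (by omega)) hm1 hm2 hj1 hj2)
      · exact ind_of_ne (sub_ne_U (isSub_S hm1 hm2 hj'.2) hm1 hm2 hj1 hj2)
      · exact ind_of_ne (c.hFU m m j hm1 hm2 hm1 hm2 hj1 hj2)
      · exact ind_of_ne (Ne.symm (c.hUV m j m j' hm1 hm2 hj1 hj2 hm1 hm2 hj'.1 hj'.2))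
  · intro m' hm' hne
    rw [Finset.mem_Icc] at hm'
    apply Finset.sum_eq_zero
    intro j' hj'
    rw [Finset.mem_Icc] at hj'
    refine rterm_zero c k ?_ ?_ ?_ ?_ ?_ ?_
    · exact ind_of_ne fun he =>
        hne (c.hUinj m' j' m j hm'.1 hm'.2 hj'.1 hj'.2 hm1 hm2 hj1 hj2 he).1
    · exact ind_of_ne (sub_ne_U (isSub_act hm'.1 hm'.2) hm1 hm2 hj1 hj2)
    · exact ind_of_ne (sub_ne_U (isSub_S hm'.1 hm'.2 (by omega)) hm1 hm2 hj1 hj2)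
    · exact ind_of_ne (sub_ne_U (isSub_S hm'.1 hm'.2 hj'.2) hm1 hm2 hj1 hj2)
    · exact ind_of_ne (c.hFU m' m j hm'.1 hm'.2 hm1 hm2 hj1 hj2)
    · exact ind_of_ne (Ne.symm (c.hUV m j m' j' hm1 hm2 hj1 hj2 hm'.1 hm'.2 hj'.1 hj'.2))

/-- `rhs` at an intermediate `V m j`. -/
theorem rhs_V {m j : ℕ} (hm1 : 1 ≤ m) (hm2 : m ≤ c.N) (hj1 : 1 ≤ j) (hj2 : j ≤ c.L m) :
    c.rhs k (c.V m j) =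
      MvPolynomial.C (k m j 3) *
          (MvPolynomial.X (c.F m) * MvPolynomial.X (c.S m j))
        + MvPolynomial.C (-(k m j 4 + k m j 5)) * MvPolynomial.X (c.V m j) := by
  rw [rhs_eq_sum_rterm]
  rw [Finset.sum_eq_single_of_mem m (Finset.mem_Icc.mpr ⟨hm1, hm2⟩)]
  · rw [Finset.sum_eq_single_of_mem j (Finset.mem_Icc.mpr ⟨hj1, hj2⟩)]
    · have i1 : ind (c.U m j) (c.V m j) = 0 :=
        ind_of_ne (c.hUV m j m j hm1 hm2 hj1 hj2 hm1 hm2 hj1 hj2)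
      have i2 : ind (c.act (m - 1)) (c.V m j) = 0 :=
        ind_of_ne (sub_ne_V (isSub_act hm1 hm2) hm1 hm2 hj1 hj2)
      have i3 : ind (c.S m (j - 1)) (c.V m j) = 0 :=
        ind_of_ne (sub_ne_V (isSub_S hm1 hm2 (by omega)) hm1 hm2 hj1 hj2)
      have i4 : ind (c.S m j) (c.V m j) = 0 :=
        ind_of_ne (sub_ne_V (isSub_S hm1 hm2 hj2) hm1 hm2 hj1 hj2)
      have i5 : ind (c.F m) (c.V m j) = 0 :=
        ind_of_ne (c.hFV m m j hm1 hm2 hm1 hm2 hj1 hj2)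
      have i6 : ind (c.V m j) (c.V m j) = 1 := ind_self _
      rw [rterm, i1, i2, i3, i4, i5, i6]
      have e1 : k m j 0 * (0 - 0 - 0) = 0 := by ring
      have e2 : k m j 1 * (0 + 0 - 0) = 0 := by ring
      have e3 : k m j 2 * (0 + 0 - 0) = 0 := by ring
      have e4 : k m j 3 * (1 - 0 - 0) = k m j 3 := by ring
      have e5 : k m j 4 * (0 + 0 - 1) = -(k m j 4) := by ring
      have e6 : k m j 5 * (0 + 0 - 1) = -(k m j 5) := by ring
      rw [e1, e2, e3, e4, e5, e6]
      simp only [map_zero, zero_mul, zero_add, map_neg, map_add]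
      ring
    · intro j' hj' hne
      rw [Finset.mem_Icc] at hj'
      refine rterm_zero c k ?_ ?_ ?_ ?_ ?_ ?_
      · exact ind_of_ne (c.hUV m j' m j hm1 hm2 hj'.1 hj'.2 hm1 hm2 hj1 hj2)
      · exact ind_of_ne (sub_ne_V (isSub_act hm1 hm2) hm1 hm2 hj1 hj2)
      · exact ind_of_ne (sub_ne_V (isSub_S hm1 hm2 (by omega)) hm1 hm2 hj1 hj2)
      · exact ind_of_ne (sub_ne_V (isSub_S hm1 hm2 hj'.2) hm1 hm2 hj1 hj2)
      · exact ind_of_ne (c.hFV m m j hm1 hm2 hm1 hm2 hj1 hj2)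
      · exact ind_of_ne fun he =>
          hne (c.hVinj m j' m j hm1 hm2 hj'.1 hj'.2 hm1 hm2 hj1 hj2 he).2
  · intro m' hm' hne
    rw [Finset.mem_Icc] at hm'
    apply Finset.sum_eq_zero
    intro j' hj'
    rw [Finset.mem_Icc] at hj'
    refine rterm_zero c k ?_ ?_ ?_ ?_ ?_ ?_
    · exact ind_of_ne (c.hUV m' j' m j hm'.1 hm'.2 hj'.1 hj'.2 hm1 hm2 hj1 hj2)
    · exact ind_of_ne (sub_ne_V (isSub_act hm'.1 hm'.2) hm1 hm2 hj1 hj2)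
    · exact ind_of_ne (sub_ne_V (isSub_S hm'.1 hm'.2 (by omega)) hm1 hm2 hj1 hj2)
    · exact ind_of_ne (sub_ne_V (isSub_S hm'.1 hm'.2 hj'.2) hm1 hm2 hj1 hj2)
    · exact ind_of_ne (c.hFV m' m j hm'.1 hm'.2 hm1 hm2 hj1 hj2)
    · exact ind_of_ne fun he =>
        hne (c.hVinj m' j' m j hm'.1 hm'.2 hj'.1 hj'.2 hm1 hm2 hj1 hj2 he).1

/-- `rhs` at the top substrate `S n (L n)` of layer `n`. -/
theorem rhs_Stop {n : ℕ} (hn1 : 1 ≤ n) (hn2 : n ≤ c.N) :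
    c.rhs k (c.S n (c.L n)) =
      MvPolynomial.C (k n (c.L n) 2) * MvPolynomial.X (c.U n (c.L n))
      + MvPolynomial.C (-(k n (c.L n) 3)) *
          (MvPolynomial.X (c.F n) * MvPolynomial.X (c.S n (c.L n)))
      + MvPolynomial.C (k n (c.L n) 4) * MvPolynomial.X (c.V n (c.L n))
      + ∑ j ∈ Finset.Icc 1 (if n < c.N then c.L (n+1) else 0),
          (MvPolynomial.C (-(k (n+1) j 0)) *
              (MvPolynomial.X (c.S n (c.L n)) * MvPolynomial.X (c.S (n+1) (j-1)))
            + MvPolynomial.C (k (n+1) j 1 + k (n+1) j 2) * MvPolynomial.X (c.U (n+1) j)) := by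
  have hLn : 1 ≤ c.L n := c.Lpos n hn1 hn2
  -- vanishing of layers other than n, n+1
  have hzero : ∀ m' ∈ Finset.Icc 1 c.N, m' ≠ n → m' ≠ n + 1 →
      ∑ j' ∈ Finset.Icc 1 (c.L m'), c.rterm k (c.S n (c.L n)) m' j' = 0 := by
    intro m' hm' hne1 hne2
    rw [Finset.mem_Icc] at hm'
    apply Finset.sum_eq_zero
    intro j' hj'
    rw [Finset.mem_Icc] at hj'
    refine rterm_zero c k ?_ ?_ ?_ ?_ ?_ ?_
    · exact ind_of_ne (Ne.symm (sub_ne_U (isSub_S hn1 hn2 le_rfl) hm'.1 hm'.2 hj'.1 hj'.2))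
    · exact ind_of_ne (act_ne_S c hm'.1 hm'.2 hn1 hn2 le_rfl (by omega))
    · exact ind_of_ne fun he =>
        hne1 (c.hSinj m' (j'-1) n (c.L n) hm'.1 hm'.2 (by omega) hn1 hn2 le_rfl he).1
    · exact ind_of_ne fun he =>
        hne1 (c.hSinj m' j' n (c.L n) hm'.1 hm'.2 hj'.2 hn1 hn2 le_rfl he).1
    · exact ind_of_ne (Ne.symm (sub_ne_F (isSub_S hn1 hn2 le_rfl) hm'.1 hm'.2))
    · exact ind_of_ne (Ne.symm (sub_ne_V (isSub_S hn1 hn2 le_rfl) hm'.1 hm'.2 hj'.1 hj'.2))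
  have hinnerN : ∑ j' ∈ Finset.Icc 1 (c.L n), c.rterm k (c.S n (c.L n)) n j' =
      MvPolynomial.C (k n (c.L n) 2) * MvPolynomial.X (c.U n (c.L n))
      + MvPolynomial.C (-(k n (c.L n) 3)) *
          (MvPolynomial.X (c.F n) * MvPolynomial.X (c.S n (c.L n)))
      + MvPolynomial.C (k n (c.L n) 4) * MvPolynomial.X (c.V n (c.L n)) := by
    rw [Finset.sum_eq_single_of_mem (c.L n) (Finset.mem_Icc.mpr ⟨hLn, le_refl _⟩)]
    · have i1 : ind (c.U n (c.L n)) (c.S n (c.L n)) = 0 :=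
        ind_of_ne (Ne.symm (sub_ne_U (isSub_S hn1 hn2 le_rfl) hn1 hn2 hLn le_rfl))
      have i2 : ind (c.act (n - 1)) (c.S n (c.L n)) = 0 :=
        ind_of_ne (act_ne_S c hn1 hn2 hn1 hn2 le_rfl (by omega))
      have i3 : ind (c.S n (c.L n - 1)) (c.S n (c.L n)) = 0 := by
        refine ind_of_ne fun he => ?_
        have := (c.hSinj n (c.L n - 1) n (c.L n) hn1 hn2 (by omega) hn1 hn2 le_rfl he).2
        omega
      have i4 : ind (c.S n (c.L n)) (c.S n (c.L n)) = 1 := ind_self _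
      have i5 : ind (c.F n) (c.S n (c.L n)) = 0 :=
        ind_of_ne (Ne.symm (sub_ne_F (isSub_S hn1 hn2 le_rfl) hn1 hn2))
      have i6 : ind (c.V n (c.L n)) (c.S n (c.L n)) = 0 :=
        ind_of_ne (Ne.symm (sub_ne_V (isSub_S hn1 hn2 le_rfl) hn1 hn2 hLn le_rfl))
      rw [rterm, i1, i2, i3, i4, i5, i6]
      have e1 : k n (c.L n) 0 * (0 - 0 - 0) = 0 := by ring
      have e2 : k n (c.L n) 1 * (0 + 0 - 0) = 0 := by ring
      have e3 : k n (c.L n) 2 * (0 + 1 - 0) = k n (c.L n) 2 := by ring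
      have e4 : k n (c.L n) 3 * (0 - 0 - 1) = -(k n (c.L n) 3) := by ring
      have e5 : k n (c.L n) 4 * (0 + 1 - 0) = k n (c.L n) 4 := by ring
      have e6 : k n (c.L n) 5 * (0 + 0 - 0) = 0 := by ring
      rw [e1, e2, e3, e4, e5, e6]
      simp only [map_zero, zero_mul, zero_add, add_zero]
    · intro j' hj' hne
      rw [Finset.mem_Icc] at hj'
      refine rterm_zero c k ?_ ?_ ?_ ?_ ?_ ?_
      · exact ind_of_ne (Ne.symm (sub_ne_U (isSub_S hn1 hn2 le_rfl) hn1 hn2 hj'.1 hj'.2))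
      · exact ind_of_ne (act_ne_S c hn1 hn2 hn1 hn2 le_rfl (by omega))
      · refine ind_of_ne fun he => ?_
        have := (c.hSinj n (j'-1) n (c.L n) hn1 hn2 (by omega) hn1 hn2 le_rfl he).2
        omega
      · exact ind_of_ne fun he =>
          hne (c.hSinj n j' n (c.L n) hn1 hn2 hj'.2 hn1 hn2 le_rfl he).2
      · exact ind_of_ne (Ne.symm (sub_ne_F (isSub_S hn1 hn2 le_rfl) hn1 hn2))
      · exact ind_of_ne (Ne.symm (sub_ne_V (isSub_S hn1 hn2 le_rfl) hn1 hn2 hj'.1 hj'.2))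
  rw [rhs_eq_sum_rterm]
  by_cases hlt : n < c.N
  · have hset : Finset.Icc 1 c.N ∩ {n, n+1} = {n, n+1} := by
      ext a
      simp only [Finset.mem_inter, Finset.mem_Icc, Finset.mem_insert, Finset.mem_singleton]
      omega
    rw [← Finset.sum_subset (s₁ := Finset.Icc 1 c.N ∩ {n, n+1}) Finset.inter_subset_left
      (by
        intro m' hm' hnm
        refine hzero m' hm' ?_ ?_ <;>
        · intro he
          apply hnm
          rw [Finset.mem_inter]
          exact ⟨hm', by simp [he]⟩)]
    rw [hset, Finset.sum_pair (by omega : n ≠ n + 1)]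
    have hinnerN1 : ∑ j' ∈ Finset.Icc 1 (c.L (n+1)), c.rterm k (c.S n (c.L n)) (n+1) j' =
        ∑ j ∈ Finset.Icc 1 (c.L (n+1)),
          (MvPolynomial.C (-(k (n+1) j 0)) *
              (MvPolynomial.X (c.S n (c.L n)) * MvPolynomial.X (c.S (n+1) (j-1)))
            + MvPolynomial.C (k (n+1) j 1 + k (n+1) j 2) * MvPolynomial.X (c.U (n+1) j)) := by
      apply Finset.sum_congr rfl
      intro j hj
      rw [Finset.mem_Icc] at hj
      have hm1' : 1 ≤ n + 1 := by omega
      have hm2' : n + 1 ≤ c.N := by omega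
      have hact : c.act (n + 1 - 1) = (c.S n (c.L n)) := by
        have : n + 1 - 1 = n := by omega
        rw [this, act_eq c hn1]
      have i1 : ind (c.U (n+1) j) (c.S n (c.L n)) = 0 :=
        ind_of_ne (Ne.symm (sub_ne_U (isSub_S hn1 hn2 le_rfl) hm1' hm2' hj.1 hj.2))
      have i2 : ind (c.act (n + 1 - 1)) (c.S n (c.L n)) = 1 := by rw [hact]; exact ind_self _
      have i3 : ind (c.S (n+1) (j-1)) (c.S n (c.L n)) = 0 :=
        ind_of_ne fun he =>
          (by omega : ¬ (n + 1 = n))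
            (c.hSinj (n+1) (j-1) n (c.L n) hm1' hm2' (by omega) hn1 hn2 le_rfl he).1
      have i4 : ind (c.S (n+1) j) (c.S n (c.L n)) = 0 :=
        ind_of_ne fun he =>
          (by omega : ¬ (n + 1 = n))
            (c.hSinj (n+1) j n (c.L n) hm1' hm2' hj.2 hn1 hn2 le_rfl he).1
      have i5 : ind (c.F (n+1)) (c.S n (c.L n)) = 0 :=
        ind_of_ne (Ne.symm (sub_ne_F (isSub_S hn1 hn2 le_rfl) hm1' hm2'))
      have i6 : ind (c.V (n+1) j) (c.S n (c.L n)) = 0 :=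
        ind_of_ne (Ne.symm (sub_ne_V (isSub_S hn1 hn2 le_rfl) hm1' hm2' hj.1 hj.2))
      rw [rterm, i1, i2, i3, i4, i5, i6, hact]
      have e1 : k (n+1) j 0 * (0 - 1 - 0) = -(k (n+1) j 0) := by ring
      have e2 : k (n+1) j 1 * (1 + 0 - 0) = k (n+1) j 1 := by ring
      have e3 : k (n+1) j 2 * (1 + 0 - 0) = k (n+1) j 2 := by ring
      have e4 : k (n+1) j 3 * (0 - 0 - 0) = 0 := by ring
      have e5 : k (n+1) j 4 * (0 + 0 - 0) = 0 := by ring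
      have e6 : k (n+1) j 5 * (0 + 0 - 0) = 0 := by ring
      rw [e1, e2, e3, e4, e5, e6]
      simp only [map_zero, zero_mul, add_zero, map_add]
      ring
    rw [hinnerN, hinnerN1, if_pos hlt]
  · have hset : Finset.Icc 1 c.N ∩ {n, n+1} = {n} := by
      ext a
      simp only [Finset.mem_inter, Finset.mem_Icc, Finset.mem_insert, Finset.mem_singleton]
      omega
    rw [← Finset.sum_subset (s₁ := Finset.Icc 1 c.N ∩ {n, n+1}) Finset.inter_subset_left
      (by
        intro m' hm' hnm
        refine hzero m' hm' ?_ ?_ <;>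
        · intro he
          apply hnm
          rw [Finset.mem_inter]
          exact ⟨hm', by simp [he]⟩)]
    rw [hset, Finset.sum_singleton, hinnerN, if_neg hlt]
    rw [Finset.Icc_eq_empty (by omega), Finset.sum_empty, add_zero]

end Aux


/-- **Lemma.** In the `N`-layer cascade, let `1 ≤ n ≤ N` and let `u·ℳ` be a monomial
appearing in `s_{n-1,L_{n-1}}^{(ℓ₀)}` (the variable `act (n-1)`) but in no lower-order
derivative, where `u` is an intermediate species of the cascade and `ℳ = ∏_j z j`
involves only variables of species among `{S k j : 1 ≤ k ≤ n-1} ∪ {E}`. Assume `ℳ`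
does not contain two variables of species reacting together and `s_{n-1,L_{n-1}}` does
not divide `ℳ`. Then `ℳ̂ = s_{n,L_n-1}·u·ℳ` appears in `s_{n,L_n}^{(ℓ₀+2)}` with
coefficient `c_{n,L_n}·a_{n,L_n}·C` (where `C` is the coefficient of `u·ℳ` in
`s_{n-1,L_{n-1}}^{(ℓ₀)}`) and in no lower-order derivative of `s_{n,L_n}`; moreover the
coefficient of `ℳ̂` in `s_{n,L_n}^{(ℓ₀+3)}` equals `c_{n,L_n}·a_{n,L_n}·(C̃ - K_{n,L_n}·C)`
where `C̃` is the coefficient of `u·ℳ` in `s_{n-1,L_{n-1}}^{(ℓ₀+1)}`. -/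
theorem monomial_lift_intermediate
    (c : Cascade σ) (k : ℕ → ℕ → Fin 6 → ℝ)
    (hk : ∀ m j, 1 ≤ m → m ≤ c.N → 1 ≤ j → j ≤ c.L m → ∀ t, 0 < k m j t)
    (n : ℕ) (hn1 : 1 ≤ n) (hnN : n ≤ c.N)
    (u : σ)
    (hu : ∃ m j, 1 ≤ m ∧ m ≤ c.N ∧ 1 ≤ j ∧ j ≤ c.L m ∧ (u = c.U m j ∨ u = c.V m j))
    (M : ℕ) (z : Fin M → σ)
    (hvars : ∀ jj, z jj = c.E ∨ ∃ kk, 1 ≤ kk ∧ kk ≤ n - 1 ∧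
      ∃ j', j' ≤ c.L kk ∧ z jj = c.S kk j')
    (ℓ₀ : ℕ)
    (happ : MvPolynomial.coeff (Finsupp.single u 1 + ∑ jj, Finsupp.single (z jj) 1)
      (c.deriv k ℓ₀ (c.act (n - 1))) ≠ 0)
    (hmin : ∀ ℓ < ℓ₀, MvPolynomial.coeff
      (Finsupp.single u 1 + ∑ jj, Finsupp.single (z jj) 1)
      (c.deriv k ℓ (c.act (n - 1))) = 0)
    (hnoreact : ¬ ∃ j₁ j₂ : Fin M, j₁ ≠ j₂ ∧ c.reactsWith (z j₁) (z j₂))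
    (hnotdvd : ∀ jj, z jj ≠ c.act (n - 1)) :
    MvPolynomial.coeff
        (Finsupp.single (c.S n (c.L n - 1)) 1 + Finsupp.single u 1 +
          ∑ jj, Finsupp.single (z jj) 1)
        (c.deriv k (ℓ₀ + 2) (c.S n (c.L n))) ≠ 0
    ∧ MvPolynomial.coeff
        (Finsupp.single (c.S n (c.L n - 1)) 1 + Finsupp.single u 1 +
          ∑ jj, Finsupp.single (z jj) 1)
        (c.deriv k (ℓ₀ + 2) (c.S n (c.L n)))
      = k n (c.L n) 2 * k n (c.L n) 0 *
          MvPolynomial.coeff (Finsupp.single u 1 + ∑ jj, Finsupp.single (z jj) 1)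
            (c.deriv k ℓ₀ (c.act (n - 1)))
    ∧ (∀ ℓ < ℓ₀ + 2,
        MvPolynomial.coeff
          (Finsupp.single (c.S n (c.L n - 1)) 1 + Finsupp.single u 1 +
            ∑ jj, Finsupp.single (z jj) 1)
          (c.deriv k ℓ (c.S n (c.L n))) = 0)
    ∧ MvPolynomial.coeff
        (Finsupp.single (c.S n (c.L n - 1)) 1 + Finsupp.single u 1 +
          ∑ jj, Finsupp.single (z jj) 1)
        (c.deriv k (ℓ₀ + 3) (c.S n (c.L n)))
      = k n (c.L n) 2 * k n (c.L n) 0 *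
          (MvPolynomial.coeff (Finsupp.single u 1 + ∑ jj, Finsupp.single (z jj) 1)
              (c.deriv k (ℓ₀ + 1) (c.act (n - 1)))
            - (k n (c.L n) 1 + k n (c.L n) 2) *
                MvPolynomial.coeff
                  (Finsupp.single u 1 + ∑ jj, Finsupp.single (z jj) 1)
                  (c.deriv k ℓ₀ (c.act (n - 1)))) := by
  classical
  have hLn : 1 ≤ c.L n := c.Lpos n hn1 hnN
  have hIu : c.IsInter u := hu
  have hsubz : ∀ jj, c.IsSub (z jj) := by
    intro jj
    rcases hvars jj with h | ⟨kk, hk1, hk2, j', hj', he⟩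
    · exact Or.inl h
    · exact Or.inr ⟨kk, j', hk1, by omega, hj', he⟩
  have hsubs' : c.IsSub (c.S n (c.L n - 1)) := isSub_S hn1 hnN (by omega)
  have hsubtop : c.IsSub (c.S n (c.L n)) := isSub_S hn1 hnN le_rfl
  set Tm : σ →₀ ℕ := Finsupp.single u 1 + ∑ jj, Finsupp.single (z jj) 1 with hTmdef
  set T : σ →₀ ℕ := Finsupp.single (c.S n (c.L n - 1)) 1 + Finsupp.single u 1 +
    ∑ jj, Finsupp.single (z jj) 1 with hTdef
  have hTsplit : T = Tm + Finsupp.single (c.S n (c.L n - 1)) 1 := by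
    rw [hTdef, hTmdef]; abel
  -- support membership of T
  have hTmem : ∀ v, T v ≠ 0 → v = c.S n (c.L n - 1) ∨ v = u ∨ ∃ jj, v = z jj := by
    intro v hv
    by_contra hcon
    push_neg at hcon
    obtain ⟨h1, h2, h3⟩ := hcon
    apply hv
    rw [hTdef, Finsupp.add_apply, Finsupp.add_apply,
      Finsupp.single_apply, Finsupp.single_apply,
      if_neg (fun he => h1 he.symm), if_neg (fun he => h2 he.symm),
      Finsupp.finset_sum_apply]
    rw [Finset.sum_eq_zero (fun jj _ => by
      rw [Finsupp.single_apply, if_neg (fun he => h3 jj he.symm)])]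
    norm_num
  have hTint : ∀ v, c.IsInter v → T v ≠ 0 → v = u := by
    intro v hvI hvT
    rcases hTmem v hvT with h | h | ⟨jj, h⟩
    · exact absurd h.symm (sub_ne_inter hsubs' hvI)
    · exact h
    · exact absurd h.symm (sub_ne_inter (hsubz jj) hvI)
  have hTu : T u = 1 := by
    rw [hTdef, Finsupp.add_apply, Finsupp.add_apply, Finsupp.single_apply,
      if_neg (sub_ne_inter hsubs' hIu), Finsupp.single_apply, if_pos rfl,
      Finsupp.finset_sum_apply]
    rw [Finset.sum_eq_zero (fun jj _ => by
      rw [Finsupp.single_apply, if_neg (sub_ne_inter (hsubz jj) hIu)])]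
    norm_num
  have hzneS : ∀ jj (m j : ℕ), 1 ≤ m → m ≤ c.N → j ≤ c.L m → n ≤ m → z jj ≠ c.S m j := by
    intro jj m j hm1 hm2 hj hnm
    rcases hvars jj with h | ⟨kk, hk1, hk2, j', hj', he⟩
    · rw [h]; exact c.hES m j hm1 hm2 hj
    · rw [he]
      intro heq
      have := (c.hSinj kk j' m j hk1 (by omega) hj' hm1 hm2 hj heq).1
      omega
  have hTs' : T (c.S n (c.L n - 1)) ≠ 0 := by
    rw [hTdef, Finsupp.add_apply, Finsupp.add_apply, Finsupp.single_eq_same]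
    omega
  have hXne : ∀ v, v ≠ c.S n (c.L n - 1) → MvPolynomial.coeff T (MvPolynomial.X (R := ℝ) v) = 0 := by
    intro v hv
    rw [MvPolynomial.coeff_X']
    refine if_neg fun he => ?_
    rw [← he, Finsupp.single_apply, if_neg hv] at hTs'
    exact hTs' rfl
  have hTact : T (c.act (n - 1)) = 0 := by
    by_contra h
    rcases hTmem _ h with h1 | h1 | ⟨jj, h1⟩
    · exact act_ne_S c hn1 hnN hn1 hnN (by omega) (by omega) h1
    · exact sub_ne_inter (isSub_act hn1 hnN) hIu h1
    · exact hnotdvd jj h1.symm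
  have hTS : T (c.S n (c.L n)) = 0 := by
    by_contra h
    rcases hTmem _ h with h1 | h1 | ⟨jj, h1⟩
    · have := (c.hSinj n (c.L n) n (c.L n - 1) hn1 hnN le_rfl hn1 hnN (by omega) h1).2
      omega
    · exact sub_ne_inter hsubtop hIu h1
    · exact hzneS jj n (c.L n) hn1 hnN le_rfl le_rfl h1.symm
  have hTF : ∀ m', 1 ≤ m' → m' ≤ c.N → T (c.F m') = 0 := by
    intro m' hm1 hm2
    by_contra h
    rcases hTmem _ h with h1 | h1 | ⟨jj, h1⟩
    · exact sub_ne_F hsubs' hm1 hm2 h1.symm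
    · obtain ⟨mu, ju, hu1, hu2, hu3, hu4, he | he⟩ := hu
      · exact c.hFU m' mu ju hm1 hm2 hu1 hu2 hu3 hu4 (h1.trans he)
      · exact c.hFV m' mu ju hm1 hm2 hu1 hu2 hu3 hu4 (h1.trans he)
    · exact sub_ne_F (hsubz jj) hm1 hm2 h1.symm
  have hTSn1 : ∀ j, n + 1 ≤ c.N → j ≤ c.L (n + 1) → T (c.S (n + 1) j) = 0 := by
    intro j hle hj
    by_contra h
    rcases hTmem _ h with h1 | h1 | ⟨jj, h1⟩
    · have := (c.hSinj (n+1) j n (c.L n - 1) (by omega) hle hj hn1 hnN (by omega) h1).1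
      omega
    · exact sub_ne_inter (isSub_S (by omega) hle hj) hIu h1
    · exact hzneS jj (n+1) j (by omega) hle hj (by omega) h1.symm
  -- no reacting pair inside T
  have hTpair : ∀ v1 v2, c.reactsWith v1 v2 → T v1 ≠ 0 → T v2 ≠ 0 → False := by
    have hactcase : ∀ m, 1 ≤ m → m ≤ c.N → (c.act (m-1) = c.E) ∨
        (1 ≤ m - 1 ∧ m - 1 ≤ c.N ∧ c.act (m-1) = c.S (m-1) (c.L (m-1))) := by
      intro m hm1 hm2
      rcases Nat.eq_or_lt_of_le hm1 with h | h
      · left; rw [Cascade.act, if_pos (by omega)]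
      · right; exact ⟨by omega, by omega, by rw [Cascade.act, if_neg (by omega)]⟩
    have hactS : ∀ m j, 1 ≤ m → m ≤ c.N → 1 ≤ j → j ≤ c.L m →
        T (c.act (m - 1)) ≠ 0 → T (c.S m (j - 1)) ≠ 0 → False := by
      intro m j hm1 hm2 hj1 hj2 hA hB
      have hActSub := isSub_act (c := c) hm1 hm2
      rcases hTmem _ hA with h1 | h1 | ⟨jj1, h1⟩
      · rcases hactcase m hm1 hm2 with h | ⟨hq1, hq2, h⟩
        · rw [h] at h1; exact c.hES n (c.L n - 1) hn1 hnN (by omega) h1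
        · rw [h] at h1
          obtain ⟨he1, he2⟩ :=
            c.hSinj (m-1) (c.L (m-1)) n (c.L n - 1) hq1 hq2 le_rfl hn1 hnN (by omega) h1
          rw [he1] at he2
          omega
      · exact sub_ne_inter hActSub hIu h1
      · rcases hTmem _ hB with h2 | h2 | ⟨jj2, h2⟩
        · have hmn := c.hSinj m (j-1) n (c.L n - 1) hm1 hm2 (by omega) hn1 hnN (by omega) h2
          apply hnotdvd jj1
          rw [← h1, hmn.1]
        · exact sub_ne_inter (isSub_S hm1 hm2 (by omega)) hIu h2
        · have hvne : c.act (m-1) ≠ c.S m (j-1) := by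
            rcases hactcase m hm1 hm2 with h | ⟨hq1, hq2, h⟩
            · rw [h]; exact c.hES m (j-1) hm1 hm2 (by omega)
            · rw [h]
              intro he
              have := (c.hSinj (m-1) (c.L (m-1)) m (j-1) hq1 hq2 le_rfl hm1 hm2 (by omega) he).1
              omega
          have hne : jj1 ≠ jj2 := by
            intro he
            rw [he] at h1
            exact hvne (h1.trans h2.symm)
          exact hnoreact ⟨jj1, jj2, hne, m, j, hm1, hm2, hj1, hj2, Or.inl ⟨h1.symm, h2.symm⟩⟩
    intro v1 v2 hr hA hB
    obtain ⟨m, j, hm1, hm2, hj1, hj2, hcase⟩ := hr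
    rcases hcase with ⟨e1, e2⟩ | ⟨e1, e2⟩ | ⟨e1, e2⟩ | ⟨e1, e2⟩
    · exact hactS m j hm1 hm2 hj1 hj2 (e1 ▸ hA) (e2 ▸ hB)
    · exact hactS m j hm1 hm2 hj1 hj2 (e1 ▸ hB) (e2 ▸ hA)
    · exact (e1 ▸ hA) (hTF m hm1 hm2)
    · exact (e1 ▸ hB) (hTF m hm1 hm2)
  -- the central splitting kill
  have mainkill : ∀ (x1 x2 : σ) (i q : ℕ), T x1 = 0 → (1 ≤ q ∨ T x2 = 0) →
      MvPolynomial.coeff T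
        (lieDIter (c.rhs k) i (MvPolynomial.X x1) *
          lieDIter (c.rhs k) q (MvPolynomial.X x2)) = 0 := by
    intro x1 x2 i q h1 h2
    rw [MvPolynomial.coeff_mul]
    apply Finset.sum_eq_zero
    rintro ⟨T1, T2⟩ hmem
    rw [Finset.HasAntidiagonal.mem_antidiagonal] at hmem
    have happly : ∀ v, T1 v + T2 v = T v := by
      intro v; rw [← hmem, Finsupp.add_apply]
    by_contra hc
    have hc1 := left_ne_zero_of_mul hc
    have hc2 := right_ne_zero_of_mul hc
    have hgen : ∀ (x0 : σ) (i0 : ℕ) (T0 T0' : σ →₀ ℕ), (∀ v, T0 v + T0' v = T v) →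
        MvPolynomial.coeff T0 (lieDIter (c.rhs k) i0 (MvPolynomial.X x0)) ≠ 0 →
        1 ≤ i0 → T0 u ≠ 0 := by
      intro x0 i0 T0 T0' hap hcf hi
      obtain ⟨i1, rfl⟩ : ∃ i1, i0 = i1 + 1 := ⟨i0 - 1, by omega⟩
      rcases lineage_CC c k (MvPolynomial.X x0) i1 T0 hcf with
        ⟨v, hvI, hvne⟩ | ⟨v1, v2, hr, hv1, hv2⟩
      · have hvT : T v ≠ 0 := by have := hap v; omega
        have := hTint v hvI hvT
        rw [← this]; exact hvne
      · exact (hTpair v1 v2 hr (by have := hap v1; omega) (by have := hap v2; omega)).elim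
    have hT1u : T1 u ≠ 0 := by
      cases i with
      | zero =>
          exfalso
          rw [CascadeAux.lieDIter_zero] at hc1
          have hT1 : T1 = Finsupp.single x1 1 := coeff_X_ne hc1
          have := happly x1
          rw [hT1, Finsupp.single_eq_same, h1] at this
          omega
      | succ i' => exact hgen x1 (i'+1) T1 T2 happly hc1 (by omega)
    have hT2u : T2 u ≠ 0 := by
      cases q with
      | zero =>
          exfalso
          rw [CascadeAux.lieDIter_zero] at hc2
          have hT2 : T2 = Finsupp.single x2 1 := coeff_X_ne hc2
          rcases h2 with h2 | h2
          · omega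
          · have := happly x2
            rw [hT2, Finsupp.single_eq_same, h2] at this
            omega
      | succ q' => exact hgen x2 (q'+1) T2 T1 (fun v => by have := happly v; omega) hc2 (by omega)
    have := happly u
    rw [hTu] at this
    omega
  have killprod : ∀ (x1 x2 : σ) (t : ℕ), T x1 = 0 → T x2 = 0 →
      MvPolynomial.coeff T
        (lieDIter (c.rhs k) t (MvPolynomial.X x1 * MvPolynomial.X x2)) = 0 := by
    intro x1 x2 t h1 h2
    rw [CascadeAux.lieDIter_mul, MvPolynomial.coeff_sum]
    apply Finset.sum_eq_zero
    intro i _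
    rw [MvPolynomial.coeff_C_mul, mainkill x1 x2 i (t - i) h1 (Or.inr h2), mul_zero]
  have killA : ∀ p, MvPolynomial.coeff T
      (lieDIter (c.rhs k) p (MvPolynomial.X (c.act (n - 1)) *
        MvPolynomial.X (c.S n (c.L n - 1))))
      = MvPolynomial.coeff Tm (lieDIter (c.rhs k) p (MvPolynomial.X (c.act (n - 1)))) := by
    intro p
    rw [CascadeAux.lieDIter_mul, MvPolynomial.coeff_sum, Finset.sum_range_succ]
    rw [Finset.sum_eq_zero (fun i hi => by
      rw [MvPolynomial.coeff_C_mul,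
        mainkill (c.act (n-1)) (c.S n (c.L n - 1)) i (p - i) hTact
          (Or.inl (by have := Finset.mem_range.mp hi; omega)), mul_zero])]
    rw [Nat.sub_self]
    simp only [CascadeAux.lieDIter_zero]
    rw [MvPolynomial.coeff_C_mul, Nat.choose_self, Nat.cast_one, one_mul, zero_add]
    rw [hTsplit, MvPolynomial.coeff_mul_X]
  have master : ∀ t, MvPolynomial.coeff T
      (lieDIter (c.rhs k) (t + 1) (MvPolynomial.X (c.S n (c.L n)))) =
      k n (c.L n) 2 * (k n (c.L n) 0 *
        ∑ p ∈ Finset.range t, (-(k n (c.L n) 1 + k n (c.L n) 2)) ^ (t - 1 - p) *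
          MvPolynomial.coeff Tm (lieDIter (c.rhs k) p (MvPolynomial.X (c.act (n - 1))))) := by
    intro t
    rw [CascadeAux.lieDIter_succ', CascadeAux.lieD_X, rhs_Stop c k hn1 hnN]
    rw [CascadeAux.lieDIter_add, CascadeAux.lieDIter_add, CascadeAux.lieDIter_add,
      CascadeAux.lieDIter_C_mul, CascadeAux.lieDIter_C_mul, CascadeAux.lieDIter_C_mul,
      CascadeAux.lieDIter_sum]
    simp only [MvPolynomial.coeff_add, MvPolynomial.coeff_C_mul, MvPolynomial.coeff_sum]
    have hrecU : lieD (c.rhs k) (MvPolynomial.X (c.U n (c.L n))) =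
        MvPolynomial.C (k n (c.L n) 0) *
          (MvPolynomial.X (c.act (n-1)) * MvPolynomial.X (c.S n (c.L n - 1)))
        + MvPolynomial.C (-(k n (c.L n) 1 + k n (c.L n) 2)) *
          MvPolynomial.X (c.U n (c.L n)) := by
      rw [CascadeAux.lieD_X, rhs_U c k hn1 hnN hLn le_rfl]
    have piece1 : MvPolynomial.coeff T (lieDIter (c.rhs k) t (MvPolynomial.X (c.U n (c.L n))))
        = k n (c.L n) 0 * ∑ p ∈ Finset.range t,
            (-(k n (c.L n) 1 + k n (c.L n) 2)) ^ (t - 1 - p) *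
            MvPolynomial.coeff Tm (lieDIter (c.rhs k) p (MvPolynomial.X (c.act (n-1)))) := by
      rw [CascadeAux.iter_linear (c.rhs k) _ _ _ _ hrecU t]
      rw [MvPolynomial.coeff_add, MvPolynomial.coeff_C_mul, MvPolynomial.coeff_C_mul,
        MvPolynomial.coeff_sum]
      rw [hXne (c.U n (c.L n)) (Ne.symm (sub_ne_U hsubs' hn1 hnN hLn le_rfl)), mul_zero,
        add_zero]
      congr 1
      apply Finset.sum_congr rfl
      intro p _
      rw [MvPolynomial.coeff_C_mul, killA p]
    have piece2 : MvPolynomial.coeff T (lieDIter (c.rhs k) t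
        (MvPolynomial.X (c.F n) * MvPolynomial.X (c.S n (c.L n)))) = 0 :=
      killprod _ _ t (hTF n hn1 hnN) hTS
    have hrecV : lieD (c.rhs k) (MvPolynomial.X (c.V n (c.L n))) =
        MvPolynomial.C (k n (c.L n) 3) *
          (MvPolynomial.X (c.F n) * MvPolynomial.X (c.S n (c.L n)))
        + MvPolynomial.C (-(k n (c.L n) 4 + k n (c.L n) 5)) *
          MvPolynomial.X (c.V n (c.L n)) := by
      rw [CascadeAux.lieD_X, rhs_V c k hn1 hnN hLn le_rfl]
    have piece3 : MvPolynomial.coeff T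
        (lieDIter (c.rhs k) t (MvPolynomial.X (c.V n (c.L n)))) = 0 := by
      rw [CascadeAux.iter_linear (c.rhs k) _ _ _ _ hrecV t]
      rw [MvPolynomial.coeff_add, MvPolynomial.coeff_C_mul, MvPolynomial.coeff_C_mul,
        MvPolynomial.coeff_sum]
      rw [hXne (c.V n (c.L n)) (Ne.symm (sub_ne_V hsubs' hn1 hnN hLn le_rfl)), mul_zero,
        add_zero]
      rw [Finset.sum_eq_zero (fun p _ => by
        rw [MvPolynomial.coeff_C_mul, killprod _ _ p (hTF n hn1 hnN) hTS, mul_zero])]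
      rw [mul_zero]
    have piece4 : ∀ j ∈ Finset.Icc 1 (if n < c.N then c.L (n+1) else 0),
        MvPolynomial.coeff T (lieDIter (c.rhs k) t
          (MvPolynomial.C (-(k (n+1) j 0)) *
            (MvPolynomial.X (c.S n (c.L n)) * MvPolynomial.X (c.S (n+1) (j-1)))
          + MvPolynomial.C (k (n+1) j 1 + k (n+1) j 2) *
            MvPolynomial.X (c.U (n+1) j))) = 0 := by
      intro j hj
      by_cases hlt : n < c.N
      · rw [if_pos hlt] at hj
        rw [Finset.mem_Icc] at hj
        have hm1' : 1 ≤ n + 1 := by omega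
        have hm2' : n + 1 ≤ c.N := by omega
        rw [CascadeAux.lieDIter_add, CascadeAux.lieDIter_C_mul, CascadeAux.lieDIter_C_mul,
          MvPolynomial.coeff_add, MvPolynomial.coeff_C_mul, MvPolynomial.coeff_C_mul]
        rw [killprod _ _ t hTS (hTSn1 (j-1) hm2' (by omega)), mul_zero, zero_add]
        have hrecU' : lieD (c.rhs k) (MvPolynomial.X (c.U (n+1) j)) =
            MvPolynomial.C (k (n+1) j 0) *
              (MvPolynomial.X (c.S n (c.L n)) * MvPolynomial.X (c.S (n+1) (j-1)))
            + MvPolynomial.C (-(k (n+1) j 1 + k (n+1) j 2)) *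
              MvPolynomial.X (c.U (n+1) j) := by
          rw [CascadeAux.lieD_X, rhs_U c k hm1' hm2' hj.1 hj.2]
          have hact : c.act (n + 1 - 1) = c.S n (c.L n) := by
            have h' : n + 1 - 1 = n := by omega
            rw [h', act_eq c hn1]
          rw [hact]
        rw [CascadeAux.iter_linear (c.rhs k) _ _ _ _ hrecU' t]
        rw [MvPolynomial.coeff_add, MvPolynomial.coeff_C_mul, MvPolynomial.coeff_C_mul,
          MvPolynomial.coeff_sum]
        rw [hXne (c.U (n+1) j) (Ne.symm (sub_ne_U hsubs' hm1' hm2' hj.1 hj.2)), mul_zero,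
          add_zero]
        rw [Finset.sum_eq_zero (fun p _ => by
          rw [MvPolynomial.coeff_C_mul,
            killprod _ _ p hTS (hTSn1 (j-1) hm2' (by omega)), mul_zero])]
        rw [mul_zero, mul_zero]
      · rw [if_neg hlt] at hj
        rw [Finset.mem_Icc] at hj
        omega
    rw [piece1, piece2, piece3]
    rw [Finset.sum_eq_zero piece4]
    ring
  -- abbreviations
  have hA0 : ∀ p, p < ℓ₀ →
      MvPolynomial.coeff Tm (lieDIter (c.rhs k) p (MvPolynomial.X (c.act (n - 1)))) = 0 := by
    intro p hp
    exact hmin p hp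
  have hderiv : ∀ ℓ x, c.deriv k ℓ x = lieDIter (c.rhs k) ℓ (MvPolynomial.X x) := fun _ _ => rfl
  -- Conclusion 2 (the coefficient formula at ℓ₀ + 2)
  have concl2 : MvPolynomial.coeff T (c.deriv k (ℓ₀ + 2) (c.S n (c.L n)))
      = k n (c.L n) 2 * k n (c.L n) 0 *
        MvPolynomial.coeff Tm (c.deriv k ℓ₀ (c.act (n - 1))) := by
    rw [hderiv, hderiv]
    have : ℓ₀ + 2 = (ℓ₀ + 1) + 1 := rfl
    rw [this, master (ℓ₀ + 1)]
    rw [Finset.sum_eq_single_of_mem ℓ₀ (Finset.mem_range.mpr (by omega))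
      (fun p _ hp => by
        rcases Nat.lt_or_ge p ℓ₀ with h | h
        · rw [hA0 p h, mul_zero]
        · exact absurd (Finset.mem_range.mp (by assumption)) (by omega))]
    have : ℓ₀ + 1 - 1 - ℓ₀ = 0 := by omega
    rw [this, pow_zero, one_mul]
    ring
  refine ⟨?_, ?_, ?_, ?_⟩
  · -- nonvanishing
    rw [concl2]
    have h2 := hk n (c.L n) hn1 hnN hLn le_rfl 2
    have h0 := hk n (c.L n) hn1 hnN hLn le_rfl 0
    exact mul_ne_zero (mul_ne_zero (by positivity) (by positivity)) happ
  · exact concl2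
  · -- vanishing below ℓ₀ + 2
    intro ℓ hℓ
    match ℓ, hℓ with
    | 0, _ =>
        have h0 : c.deriv k 0 (c.S n (c.L n)) = MvPolynomial.X (R := ℝ) (c.S n (c.L n)) := rfl
        rw [h0]
        refine hXne (c.S n (c.L n)) fun he => ?_
        have := (c.hSinj n (c.L n) n (c.L n - 1) hn1 hnN le_rfl hn1 hnN (by omega) he).2
        omega
    | (t+1), hℓ => 
        rw [hderiv, master t]
        rw [Finset.sum_eq_zero (fun p hp => by
          rw [hA0 p (by
            have := Finset.mem_range.mp hp
            omega), mul_zero])]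
        ring
  · -- the coefficient at ℓ₀ + 3
    rw [hderiv, hderiv, hderiv]
    have : ℓ₀ + 3 = (ℓ₀ + 2) + 1 := rfl
    rw [this, master (ℓ₀ + 2)]
    rw [Finset.sum_range_succ, Finset.sum_range_succ]
    rw [Finset.sum_eq_zero (fun p hp => by
      rw [hA0 p (Finset.mem_range.mp hp), mul_zero])]
    have e1 : ℓ₀ + 2 - 1 - ℓ₀ = 1 := by omega
    have e2 : ℓ₀ + 2 - 1 - (ℓ₀ + 1) = 0 := by omega
    rw [e1, e2, pow_zero, pow_one]
    ring


end Cascade
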